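/- Let d, D ∈ ℕ₊, L ≥ 0, and let f : ℝ^d → ℝ^D be L-Lipschitz. Define the vector field V_f : ℝ^{d+D} → ℝ^{d+D} by V_f(x,y) = (0, f(x)). Then V_f is max(1, L)-Lipschitz, the solution of the autonomous ODE governed by V_f with initial condition (x, y) is the curve t ↦ (x, y + t f(x)), so the time-1 flow satisfies Flow(V_f)(x,y) = (x, y + f(x)); in particular, with ι(x) = (x, 0) and π(x,y) = y, one has π(Flow(V_f)(ι(x))) = f(x) for every x ∈ ℝ^d. -/

import Mathlib

open Metric Set Function Filter Topology

noncomputable section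

/-- `f` equals the identity outside `S` (supported† on `S`). -/
def SuppDaggerOn {E : Type*} (f : E → E) (S : Set E) : Prop := ∀ x, x ∉ S → f x = x

/-- `V` vanishes outside `S`. -/
def ZeroOutside {E F : Type*} [Zero F] (V : E → F) (S : Set E) : Prop := ∀ x, x ∉ S → V x = 0

/-- `φ` is the time-1 solution map of the autonomous ODE `ẋ_t = V (x_t)`:
for every initial condition `x` there is a solution curve starting at `x`
whose time-1 value is `φ x`. -/
def IsTime1Flow {E : Type*} [NormedAddCommGroup E] [NormedSpace ℝ E]
    (V : E → E) (φ : E → E) : Prop :=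
  ∀ x : E, ∃ γ : ℝ → E, γ 0 = x ∧ (∀ t : ℝ, HasDerivAt γ (V (γ t)) t) ∧ γ 1 = φ x

/-- `compFlows ψ T = ψ (T-1) ∘ ⋯ ∘ ψ 0`. -/
def compFlows {E : Type*} (ψ : ℕ → E → E) : ℕ → E → E
  | 0 => id
  | T + 1 => ψ T ∘ compFlows ψ T

/-- Orientation preserving: homotopic to the identity. -/
def HomotopicToId {E : Type*} [TopologicalSpace E] (φ : E → E) : Prop :=
  ∃ f : C(E, E), ⇑f = φ ∧ f.Homotopic (ContinuousMap.id E)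

/-- The closed unit cube `[0,1]^d`. -/
def cube01 (d : ℕ) : Set (Fin d → ℝ) := Set.univ.pi fun _ => Set.Icc (0:ℝ) 1

/-- The open unit cube `(0,1)^d`. -/
def cube01open (d : ℕ) : Set (Fin d → ℝ) := Set.univ.pi fun _ => Set.Ioo (0:ℝ) 1

/-- The ReLU activation. -/
def relu (x : ℝ) : ℝ := max x 0

open scoped Classical in
/-- Number of nonzero entries of a matrix. -/
noncomputable def nnzM {m n : ℕ} (W : Matrix (Fin m) (Fin n) ℝ) : ℕ :=
  (Finset.univ.filter fun p : Fin m × Fin n => W p.1 p.2 ≠ 0).card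

open scoped Classical in
/-- Number of nonzero entries of a vector. -/
noncomputable def nnzV {m : ℕ} (b : Fin m → ℝ) : ℕ :=
  (Finset.univ.filter fun i : Fin m => b i ≠ 0).card

/-- `MLPRep σ depth width params n m f`: the map `f : ℝ^n → ℝ^m` is a σ-MLP with `depth`
affine layers, all hidden layers of dimension at most `width`, and `params` nonzero
parameters, i.e. `f = L_depth ∘ (σ ∘ L_{depth-1}) ∘ ⋯ ∘ (σ ∘ L_1)` for affine maps `L_l`. -/
inductive MLPRep (σ : ℝ → ℝ) :
    (depth width params n m : ℕ) → ((Fin n → ℝ) → (Fin m → ℝ)) → Prop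
  | affine {n m : ℕ} (W : Matrix (Fin m) (Fin n) ℝ) (b : Fin m → ℝ) :
      MLPRep σ 1 0 (nnzM W + nnzV b) n m (fun x => W.mulVec x + b)
  | layer {n k m depth width params : ℕ}
      (W : Matrix (Fin k) (Fin n) ℝ) (b : Fin k → ℝ)
      {f : (Fin k → ℝ) → (Fin m → ℝ)}
      (hf : MLPRep σ depth width params k m f) :
      MLPRep σ (depth + 1) (max k width) (params + (nnzM W + nnzV b)) n m
        (fun x => f (fun i => σ ((W.mulVec x + b) i)))

/-- `f` is a σ-MLP (of some depth, width and parameter count). -/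
def IsMLP (σ : ℝ → ℝ) {n m : ℕ} (f : (Fin n → ℝ) → (Fin m → ℝ)) : Prop :=
  ∃ depth width params, MLPRep σ depth width params n m f

/-- The lifted vector field `V_f(x, y) = (0, f x)` on `ℝ^d × ℝ^D`. -/
def liftedVF {d D : ℕ} (f : (Fin d → ℝ) → (Fin D → ℝ)) :
    (Fin d → ℝ) × (Fin D → ℝ) → (Fin d → ℝ) × (Fin D → ℝ) :=
  fun p => (0, f p.1)

/-- **Statement 19.** For `L`-Lipschitz `f : ℝ^d → ℝ^D`, the lifted vector field
`V_f(x,y) = (0, f x)` is `max(1, L)`-Lipschitz, the solution of the ODE governed by `V_f`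
starting at `(x, y)` is `t ↦ (x, y + t • f x)`, hence the time-1 flow satisfies
`Flow(V_f)(x,y) = (x, y + f x)`; in particular `π (Flow(V_f) (ι x)) = f x`. -/
theorem lifted_vector_field_flow (d D : ℕ) (hd : 0 < d) (hD : 0 < D)
    (L : ℝ) (hL : 0 ≤ L) (f : (Fin d → ℝ) → (Fin D → ℝ))
    (hf : LipschitzWith (Real.toNNReal L) f) :
    LipschitzWith (max 1 (Real.toNNReal L)) (liftedVF f) ∧
    (∀ x : Fin d → ℝ, ∀ y : Fin D → ℝ,
      (fun t : ℝ => ((x, y + t • f x) : (Fin d → ℝ) × (Fin D → ℝ))) 0 = (x, y) ∧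
      ∀ t : ℝ, HasDerivAt (fun t : ℝ => ((x, y + t • f x) : (Fin d → ℝ) × (Fin D → ℝ)))
        (liftedVF f (x, y + t • f x)) t) ∧
    ∀ φ : (Fin d → ℝ) × (Fin D → ℝ) → (Fin d → ℝ) × (Fin D → ℝ),
      IsTime1Flow (liftedVF f) φ →
        (∀ x y, φ (x, y) = (x, y + f x)) ∧ ∀ x, (φ (x, 0)).2 = f x := by
  refine ⟨?_, ?_, ?_⟩
  · have h1 : LipschitzWith (max 0 (Real.toNNReal L)) (liftedVF f) := by
      have := (LipschitzWith.const (α := (Fin d → ℝ) × (Fin D → ℝ))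
          (b := (0 : Fin d → ℝ))).prodMk (hf.comp LipschitzWith.prod_fst)
      exact (by simpa [mul_one] using this : LipschitzWith (max 0 (Real.toNNReal L))
        (fun p : (Fin d → ℝ) × (Fin D → ℝ) => ((0 : Fin d → ℝ), f p.1)))
    exact h1.weaken (by
      exact max_le_max (by norm_num) le_rfl)
  · intro x y
    refine ⟨by simp, fun t => ?_⟩
    have h2 : HasDerivAt (fun t : ℝ => y + t • f x) (f x) t := by
      simpa using (hasDerivAt_id t).smul_const (f x) |>.const_add y
    have := (hasDerivAt_const t x).prodMk h2
    simpa [liftedVF] using this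
  · intro φ hφ
    have key : ∀ x y, φ (x, y) = (x, y + f x) := by
      intro x y
      obtain ⟨γ, hγ0, hγ', hγ1⟩ := hφ (x, y)
      have hfst : ∀ t : ℝ, (γ t).1 = x := by
        have hd : ∀ t : ℝ, HasDerivAt (fun t => (γ t).1) 0 t := by
          intro t
          simpa [liftedVF, Function.comp_def] using (hasFDerivAt_fst.comp_hasDerivAt t (hγ' t))
        intro t
        have := is_const_of_deriv_eq_zero (f := fun t => (γ t).1)
          (fun s => (hd s).differentiableAt) (fun s => (hd s).deriv) t 0
        simpa [hγ0] using this
      have hsnd : ∀ t : ℝ, (γ t).2 = y + t • f x := by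
        have hd : ∀ t : ℝ, HasDerivAt (fun t => (γ t).2 - t • f x) 0 t := by
          intro t
          have h1 : HasDerivAt (fun t => (γ t).2) (f x) t := by
            have := (hγ' t).snd
            simp only [liftedVF, hfst] at this
            exact this
          simpa using h1.fun_sub ((hasDerivAt_id t).smul_const (f x))
        intro t
        have := is_const_of_deriv_eq_zero (f := fun t => (γ t).2 - t • f x)
          (fun s => (hd s).differentiableAt) (fun s => (hd s).deriv) t 0
        have h0 : (γ 0).2 = y := by rw [hγ0]
        have : (γ t).2 - t • f x = y := by simpa [h0] using this
        linear_combination (norm := module) this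
      have : γ 1 = (x, y + f x) := by
        ext <;> simp [hfst, hsnd]
      rw [← hγ1, this]
    exact ⟨key, fun x => by simp [key x 0]⟩
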